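/- For every p ∈ (0,1) one has 2p(1−p) ≤ √(π/2) · I(p), with equality at p = 1/2; consequently sup_{p∈(0,1)} 2p(1−p)/I(p) = √(π/2). -/

import Mathlib

/-- The standard Gaussian distribution function `Φ(x) = (2π)^{-1/2} ∫_{-∞}^x e^{-y²/2} dy`. -/
noncomputable def stdGaussCDF (x : ℝ) : ℝ :=
  ∫ y in Set.Iic x, Real.exp (-y ^ 2 / 2) / Real.sqrt (2 * Real.pi)

/-- The Gaussian isoperimetric profile `I = φ ∘ Φ⁻¹` on `[0,1]`, with `I(0) = I(1) = 0`. -/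
noncomputable def gaussI (p : ℝ) : ℝ :=
  if p = 0 ∨ p = 1 then 0
  else Real.exp (-(Function.invFun stdGaussCDF p) ^ 2 / 2) / Real.sqrt (2 * Real.pi)


section ProofAux
open Real MeasureTheory Set Filter

noncomputable def gphi (y : ℝ) : ℝ := Real.exp (-y ^ 2 / 2) / Real.sqrt (2 * Real.pi)

lemma gphi_eq (y : ℝ) : gphi y = Real.exp (-(1/2) * y ^ 2) / Real.sqrt (2 * Real.pi) := by
  rw [gphi]; ring_nf

lemma gphi_pos (y : ℝ) : 0 < gphi y :=
  div_pos (Real.exp_pos _) (Real.sqrt_pos.2 (by positivity))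

lemma gphi_cont : Continuous gphi := by
  unfold gphi; fun_prop

lemma gphi_fun_eq : gphi = fun y => Real.exp (-(1/2) * y ^ 2) / Real.sqrt (2 * Real.pi) :=
  funext gphi_eq

lemma gphi_integrable : Integrable gphi := by
  rw [gphi_fun_eq]
  exact (integrable_exp_neg_mul_sq (by norm_num : (0:ℝ) < 1/2)).div_const _

lemma gphi_integral : ∫ y, gphi y = 1 := by
  rw [gphi_fun_eq]
  rw [integral_div, integral_gaussian, show Real.pi / (1/2) = 2 * Real.pi by ring,
    div_self (by positivity)]

lemma gphi_even (y : ℝ) : gphi (-y) = gphi y := by simp [gphi]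

lemma Phi_eq (x : ℝ) : stdGaussCDF x = ∫ y in Iic x, gphi y := rfl

lemma hasDerivAt_Phi (x : ℝ) : HasDerivAt stdGaussCDF (gphi x) x := by
  have h : ∀ y : ℝ, stdGaussCDF 0 + ∫ t in (0:ℝ)..y, gphi t = stdGaussCDF y := by
    intro y
    rw [Phi_eq, Phi_eq, ← intervalIntegral.integral_Iic_sub_Iic
      gphi_integrable.integrableOn gphi_integrable.integrableOn]
    ring
  have h2 := ((gphi_cont.integral_hasStrictDerivAt 0 x).hasDerivAt).const_add (stdGaussCDF 0)
  exact h2.congr_of_eventuallyEq (Eventually.of_forall fun y => (h y).symm)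

lemma Phi_symm (x : ℝ) : stdGaussCDF (-x) = 1 - stdGaussCDF x := by
  have h1 : ∫ y in Iic x, gphi y = ∫ y in Ioi (-x), gphi y := by
    rw [← integral_comp_neg_Iic]
    simp_rw [gphi_even]
  have h2 := intervalIntegral.integral_Iic_add_Ioi (b := -x) gphi_integrable.integrableOn
    gphi_integrable.integrableOn
  rw [gphi_integral] at h2
  rw [Phi_eq, Phi_eq, h1]
  linarith

lemma Phi_zero : stdGaussCDF 0 = 1/2 := by
  have := Phi_symm 0
  rw [neg_zero] at this
  linarith

lemma Phi_strictMono : StrictMono stdGaussCDF := by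
  have hd : ∀ x, HasDerivAt stdGaussCDF (gphi x) x := hasDerivAt_Phi
  exact strictMono_of_deriv_pos fun x => by
    rw [(hd x).deriv]; exact gphi_pos x

lemma Phi_pos (x : ℝ) : 0 < stdGaussCDF x := by
  rw [Phi_eq]
  rw [setIntegral_pos_iff_support_of_nonneg_ae
    (Eventually.of_forall fun y => (gphi_pos y).le) gphi_integrable.integrableOn]
  have : Function.support gphi = univ := by
    ext y; simp [Function.mem_support, (gphi_pos y).ne']
  rw [this, univ_inter]
  simp [Real.volume_Iic]

lemma Phi_lt_one (x : ℝ) : stdGaussCDF x < 1 := by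
  have := Phi_symm x
  have := Phi_pos (-x)
  linarith

lemma Phi_tendsto_atTop : Tendsto stdGaussCDF atTop (nhds 1) := by
  have := (MeasureTheory.aecover_Iic (μ := volume) (l := atTop) (b := fun x : ℝ => x)
    tendsto_id).integral_tendsto_of_countably_generated gphi_integrable
  rw [gphi_integral] at this
  exact this

lemma Phi_tendsto_atBot : Tendsto stdGaussCDF atBot (nhds 0) := by
  have h : Tendsto (fun x : ℝ => 1 - stdGaussCDF (-x)) atBot (nhds 0) := by
    have := Phi_tendsto_atTop.comp (tendsto_neg_atBot_atTop)
    have h2 : Tendsto (fun x : ℝ => 1 - stdGaussCDF (-x)) atBot (nhds (1 - 1)) :=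
      tendsto_const_nhds.sub this
    simpa using h2
  refine h.congr fun x => ?_
  rw [Phi_symm]; ring


lemma Phi_cont : Continuous stdGaussCDF :=
  continuous_iff_continuousAt.2 fun x => (hasDerivAt_Phi x).continuousAt

lemma Phi_surj {p : ℝ} (hp : p ∈ Ioo (0:ℝ) 1) : ∃ x, stdGaussCDF x = p := by
  obtain ⟨a, ha⟩ := (Phi_tendsto_atBot.eventually_lt_const hp.1).exists
  obtain ⟨b, hb⟩ := (Phi_tendsto_atTop.eventually_const_lt hp.2).exists
  have hab : a ≤ b := (Phi_strictMono.lt_iff_lt.1 (ha.trans hb)).le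
  have := intermediate_value_Icc hab Phi_cont.continuousOn
  obtain ⟨x, _, hx⟩ := this ⟨ha.le, hb.le⟩
  exact ⟨x, hx⟩

lemma sqrt2pi_sq : Real.sqrt (2*Real.pi) * Real.sqrt (2*Real.pi) = 2*Real.pi :=
  Real.mul_self_sqrt (by positivity)

lemma hasDerivAt_h (x : ℝ) :
    HasDerivAt (fun x => 4 / Real.sqrt (2*Real.pi) * (2 * stdGaussCDF x - 1) - x)
      (4 / Real.pi * Real.exp (-x^2/2) - 1) x := by
  have h1 := ((((hasDerivAt_Phi x).const_mul 2).sub_const 1).const_mul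
    (4 / Real.sqrt (2*Real.pi))).sub (hasDerivAt_id x)
  refine h1.congr_deriv ?_
  symm
  rw [gphi]
  set S := Real.sqrt (2*Real.pi) with hS
  have hs : S * S = 2 * Real.pi := sqrt2pi_sq
  have hS0 : S ≠ 0 := by rw [hS]; positivity
  have hpi := Real.pi_ne_zero
  field_simp
  have he : Real.exp (-(x^2/2)) = Real.exp (-x^2/2) := by congr 1; ring
  linear_combination (4 * Real.exp (-x^2/2)) * hs + (4 * S^2 - 8 * Real.pi) * he

lemma hasDerivAt_F (x : ℝ) :
    HasDerivAt (fun x => (2 * stdGaussCDF x - 1)^2 + Real.exp (-x^2/2))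
      (Real.exp (-x^2/2) * (4 / Real.sqrt (2*Real.pi) * (2 * stdGaussCDF x - 1) - x)) x := by
  have hsq : HasDerivAt (fun x : ℝ => -x^2/2) (-x) x := by
    have := ((hasDerivAt_pow 2 x).neg).div_const 2
    refine this.congr_deriv ?_
    symm
    simp; ring
  have h1 := (((hasDerivAt_Phi x).const_mul 2).sub_const 1).pow 2
  have h2 := (hsq.exp)
  have h3 := h1.add h2
  refine h3.congr_deriv ?_
  symm
  have hs := sqrt2pi_sq
  have hpi := Real.pi_pos
  rw [gphi]
  field_simp
  ring

lemma h_cont : Continuous (fun x : ℝ => 4 / Real.sqrt (2*Real.pi) * (2 * stdGaussCDF x - 1) - x) :=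
  continuous_iff_continuousAt.2 fun x => (hasDerivAt_h x).continuousAt

lemma F_cont : Continuous (fun x : ℝ => (2 * stdGaussCDF x - 1)^2 + Real.exp (-x^2/2)) :=
  continuous_iff_continuousAt.2 fun x => (hasDerivAt_F x).continuousAt

lemma key_nonneg : ∀ x : ℝ, 0 ≤ x → 1 ≤ (2 * stdGaussCDF x - 1)^2 + Real.exp (-x^2/2) := by
  set c : ℝ := 4 / Real.sqrt (2*Real.pi) with hc
  set h : ℝ → ℝ := fun x => c * (2 * stdGaussCDF x - 1) - x with hh
  set F : ℝ → ℝ := fun x => (2 * stdGaussCDF x - 1)^2 + Real.exp (-x^2/2) with hF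
  have hcpos : 0 < c := by rw [hc]; positivity
  have hpi := Real.pi_pos
  have hF0 : F 0 = 1 := by simp [hF, Phi_zero]
  have hh0 : h 0 = 0 := by simp [hh, Phi_zero]
  have hlog : 0 < Real.log (4/Real.pi) := by
    apply Real.log_pos
    rw [lt_div_iff₀ hpi]
    nlinarith [Real.pi_lt_d2]
  set s : ℝ := Real.sqrt (2 * Real.log (4/Real.pi)) with hs
  have hspos : 0 < s := by rw [hs]; positivity
  have hs2 : s^2 = 2 * Real.log (4/Real.pi) := Real.sq_sqrt (by linarith)
  -- derivative sign of h
  have hderivh : ∀ x : ℝ, deriv h x = 4/Real.pi * Real.exp (-x^2/2) - 1 :=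
    fun x => (hasDerivAt_h x).deriv
  have hsign : ∀ x : ℝ, x^2 ≤ s^2 → 0 ≤ deriv h x := by
    intro x hx
    rw [hderivh]
    have : Real.exp (-Real.log (4/Real.pi)) ≤ Real.exp (-x^2/2) := by
      apply Real.exp_le_exp.2; rw [hs2] at hx; linarith
    rw [Real.exp_neg, Real.exp_log (by positivity)] at this
    have h4 : ((4:ℝ)/Real.pi)⁻¹ = Real.pi/4 := by field_simp
    rw [h4] at this
    have : 4/Real.pi * (Real.pi/4) ≤ 4/Real.pi * Real.exp (-x^2/2) := by
      apply mul_le_mul_of_nonneg_left this (by positivity)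
    rw [div_mul_div_comm] at this
    rw [show (4:ℝ)*Real.pi/(Real.pi*4) = 1 by field_simp] at this
    linarith
  have hsign' : ∀ x : ℝ, s^2 ≤ x^2 → deriv h x ≤ 0 := by
    intro x hx
    rw [hderivh]
    have : Real.exp (-x^2/2) ≤ Real.exp (-Real.log (4/Real.pi)) := by
      apply Real.exp_le_exp.2; rw [hs2] at hx; linarith
    rw [Real.exp_neg, Real.exp_log (by positivity)] at this
    have h4 : ((4:ℝ)/Real.pi)⁻¹ = Real.pi/4 := by field_simp
    rw [h4] at this
    have h5 : 4/Real.pi * Real.exp (-x^2/2) ≤ 4/Real.pi * (Real.pi/4) :=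
      mul_le_mul_of_nonneg_left this (by positivity)
    rw [show 4/Real.pi * (Real.pi/4) = 1 by field_simp] at h5
    linarith
  have hdiff : ∀ x : ℝ, DifferentiableAt ℝ h x := fun x => (hasDerivAt_h x).differentiableAt
  -- h monotone on [0,s]
  have hmono : MonotoneOn h (Icc 0 s) := by
    apply monotoneOn_of_deriv_nonneg (convex_Icc _ _) h_cont.continuousOn
      (fun x _ => (hdiff x).differentiableWithinAt)
    intro x hx
    rw [interior_Icc] at hx
    apply hsign
    nlinarith [hx.1, hx.2]
  -- h antitone on [s,∞)
  have hanti : AntitoneOn h (Ici s) := by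
    apply antitoneOn_of_deriv_nonpos (convex_Ici _) h_cont.continuousOn
      (fun x _ => (hdiff x).differentiableWithinAt)
    intro x hx
    rw [interior_Ici] at hx
    apply hsign'
    nlinarith [mem_Ioi.1 hx]
  have hhs : 0 ≤ h s := by
    have := hmono (left_mem_Icc.2 hspos.le) (right_mem_Icc.2 hspos.le) hspos.le
    rw [hh0] at this; exact this
  -- a point where h is negative
  set x₁ : ℝ := max s c + 1 with hx₁
  have hx₁s : s ≤ x₁ := le_trans (le_max_left _ _) (by linarith)
  have hx₁neg : h x₁ < 0 := by
    have h1 : 2 * stdGaussCDF x₁ - 1 < 1 := by have := Phi_lt_one x₁; linarith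
    have h2 : c * (2 * stdGaussCDF x₁ - 1) < c * 1 := by
      exact mul_lt_mul_of_pos_left h1 hcpos
    have h3 : c ≤ max s c := le_max_right _ _
    simp only [hh]
    nlinarith
  -- the turning point
  set T : Set ℝ := {x | s ≤ x ∧ 0 ≤ h x} with hT
  have hTclosed : IsClosed T := by
    have : T = Ici s ∩ (h ⁻¹' Ici 0) := by ext y; simp [hT, and_comm]
    rw [this]
    exact isClosed_Ici.inter (isClosed_Ici.preimage h_cont)
  have hTne : T.Nonempty := ⟨s, le_refl _, hhs⟩
  have hTbdd : BddAbove T := by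
    refine ⟨x₁, fun x hx => ?_⟩
    by_contra hcon
    push_neg at hcon
    have := hanti (mem_Ici.2 hx₁s) (mem_Ici.2 hx.1) hcon.le
    have := hx.2
    linarith
  set x₀ : ℝ := sSup T with hx₀
  have hx₀T : x₀ ∈ T := hTclosed.csSup_mem hTne hTbdd
  have hx₀s : s ≤ x₀ := hx₀T.1
  -- F monotone on [0, x₀]
  have hdiffF : ∀ x : ℝ, DifferentiableAt ℝ F x := fun x => (hasDerivAt_F x).differentiableAt
  have hderivF : ∀ x : ℝ, deriv F x = Real.exp (-x^2/2) * h x := fun x => (hasDerivAt_F x).deriv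
  have hFmono : MonotoneOn F (Icc 0 x₀) := by
    apply monotoneOn_of_deriv_nonneg (convex_Icc _ _) F_cont.continuousOn
      (fun x _ => (hdiffF x).differentiableWithinAt)
    intro x hx
    rw [interior_Icc] at hx
    rw [hderivF]
    apply mul_nonneg (Real.exp_pos _).le
    rcases le_total x s with hxs | hxs
    · have := hmono (left_mem_Icc.2 hspos.le) (mem_Icc.2 ⟨hx.1.le, hxs⟩) hx.1.le
      rw [hh0] at this; exact this
    · exact le_trans hx₀T.2 (hanti (mem_Ici.2 hxs) (mem_Ici.2 (le_trans hxs hx.2.le)) hx.2.le)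
  have hFanti : AntitoneOn F (Ici x₀) := by
    apply antitoneOn_of_deriv_nonpos (convex_Ici _) F_cont.continuousOn
      (fun x _ => (hdiffF x).differentiableWithinAt)
    intro x hx
    rw [interior_Ici] at hx
    rw [hderivF]
    apply mul_nonpos_of_nonneg_of_nonpos (Real.exp_pos _).le
    by_contra hcon
    push_neg at hcon
    have hxT : x ∈ T := ⟨le_trans hx₀s (mem_Ioi.1 hx).le, hcon.le⟩
    have := le_csSup hTbdd hxT
    have := mem_Ioi.1 hx
    linarith
  -- limit of F at infinity
  have hlimF : Tendsto F atTop (nhds 1) := by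
    have l1 : Tendsto (fun x : ℝ => (2 * stdGaussCDF x - 1)^2) atTop (nhds 1) := by
      have := ((Phi_tendsto_atTop.const_mul 2).sub_const 1).pow 2
      norm_num at this
      exact this
    have l2 : Tendsto (fun x : ℝ => Real.exp (-x^2/2)) atTop (nhds 0) := by
      apply Real.tendsto_exp_atBot.comp
      have h1 : Tendsto (fun x : ℝ => x^2/2) atTop atTop :=
        (tendsto_pow_atTop (two_ne_zero)).atTop_div_const (by norm_num)
      have := tendsto_neg_atTop_atBot.comp h1
      refine this.congr fun x => ?_
      simp [neg_div]
    simpa using l1.add l2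
  intro x hx
  rcases le_total x x₀ with hxx | hxx
  · have := hFmono (left_mem_Icc.2 (le_trans hx hxx)) (mem_Icc.2 ⟨hx, hxx⟩) hx
    rw [hF0] at this; exact this
  · refine le_of_tendsto hlimF ?_
    filter_upwards [eventually_ge_atTop x] with y hy
    exact hFanti (mem_Ici.2 hxx) (mem_Ici.2 (le_trans hxx hy)) hy

lemma key (x : ℝ) : 1 ≤ (2 * stdGaussCDF x - 1)^2 + Real.exp (-x^2/2) := by
  rcases le_total 0 x with hx | hx
  · exact key_nonneg x hx
  · have := key_nonneg (-x) (by linarith)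
    rw [Phi_symm] at this
    have e1 : (2*(1 - stdGaussCDF x)-1)^2 = (2*stdGaussCDF x -1)^2 := by ring
    have e2 : (-x:ℝ)^2 = x^2 := by ring
    rw [e1, e2] at this
    exact this


lemma sqrt_ratio : Real.sqrt (Real.pi/2) / Real.sqrt (2*Real.pi) = 1/2 := by
  have hpi := Real.pi_pos
  rw [show (2*Real.pi : ℝ) = (Real.pi/2) * 2^2 by ring, Real.sqrt_mul (by positivity),
    Real.sqrt_sq (by norm_num)]
  have h0 : Real.sqrt (Real.pi/2) ≠ 0 := by positivity
  field_simp

lemma sqrt_ratio' : Real.sqrt (Real.pi/2) = Real.sqrt (2*Real.pi) / 2 := by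
  have h0 : Real.sqrt (2*Real.pi) ≠ 0 := by positivity
  have := sqrt_ratio
  field_simp at this ⊢
  linarith

lemma gaussI_Ioo {p : ℝ} (hp : p ∈ Ioo (0:ℝ) 1) :
    gaussI p = Real.exp (-(Function.invFun stdGaussCDF p) ^ 2 / 2) / Real.sqrt (2 * Real.pi) := by
  rw [gaussI, if_neg]
  push_neg
  exact ⟨ne_of_gt hp.1, ne_of_lt hp.2⟩

lemma gaussI_half : gaussI (1/2) = 1 / Real.sqrt (2 * Real.pi) := by
  have hinv0 : Function.invFun stdGaussCDF ((1:ℝ)/2) = 0 := by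
    rw [← Phi_zero]
    exact Function.leftInverse_invFun Phi_strictMono.injective 0
  rw [gaussI, if_neg (by norm_num), hinv0]
  norm_num

end ProofAux

/-- For every `p ∈ (0,1)` one has `2p(1−p) ≤ √(π/2)·I(p)`, with equality at
`p = 1/2`; consequently `sup_{p∈(0,1)} 2p(1−p)/I(p) = √(π/2)`. -/
theorem ratio_to_isoperimetric_profile :
    (∀ p ∈ Set.Ioo (0 : ℝ) 1, 2 * p * (1 - p) ≤ Real.sqrt (Real.pi / 2) * gaussI p) ∧
    2 * (1 / 2 : ℝ) * (1 - 1 / 2) = Real.sqrt (Real.pi / 2) * gaussI (1 / 2) ∧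
    sSup ((fun p => 2 * p * (1 - p) / gaussI p) '' Set.Ioo 0 1)
      = Real.sqrt (Real.pi / 2) := by
  have hmain : ∀ p ∈ Set.Ioo (0 : ℝ) 1, 2 * p * (1 - p) ≤ Real.sqrt (Real.pi / 2) * gaussI p := by
    intro p hp
    have hx := Function.invFun_eq (Phi_surj hp)
    set x := Function.invFun stdGaussCDF p with hxdef
    rw [gaussI_Ioo hp, ← hxdef]
    have hk := key x
    rw [hx] at hk
    have heq : Real.sqrt (Real.pi/2) * (Real.exp (-x^2/2) / Real.sqrt (2*Real.pi))
        = Real.exp (-x^2/2) / 2 := by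
      rw [show Real.sqrt (Real.pi/2) * (Real.exp (-x^2/2) / Real.sqrt (2*Real.pi))
        = Real.exp (-x^2/2) * (Real.sqrt (Real.pi/2) / Real.sqrt (2*Real.pi)) by ring, sqrt_ratio]
      ring
    rw [heq]
    nlinarith [hk]
  have hhalf : 2 * (1 / 2 : ℝ) * (1 - 1 / 2) = Real.sqrt (Real.pi / 2) * gaussI (1 / 2) := by
    rw [gaussI_half, show Real.sqrt (Real.pi/2) * (1 / Real.sqrt (2*Real.pi))
      = Real.sqrt (Real.pi/2) / Real.sqrt (2*Real.pi) by ring, sqrt_ratio]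
    norm_num
  refine ⟨hmain, hhalf, ?_⟩
  have hmem : Real.sqrt (Real.pi/2) ∈ (fun p => 2*p*(1-p) / gaussI p) '' Set.Ioo (0:ℝ) 1 := by
    refine ⟨1/2, by norm_num, ?_⟩
    show 2 * (1/2 : ℝ) * (1 - 1/2) / gaussI (1/2) = Real.sqrt (Real.pi/2)
    rw [gaussI_half]
    have h0 : Real.sqrt (2*Real.pi) ≠ 0 := by positivity
    rw [sqrt_ratio']
    field_simp
    ring
  have hub : ∀ v ∈ (fun p => 2*p*(1-p) / gaussI p) '' Set.Ioo (0:ℝ) 1,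
      v ≤ Real.sqrt (Real.pi/2) := by
    rintro v ⟨p, hp, rfl⟩
    have hpos : 0 < gaussI p := by rw [gaussI_Ioo hp]; positivity
    rw [div_le_iff₀ hpos]
    have := hmain p hp
    linarith [this, mul_comm (Real.sqrt (Real.pi/2)) (gaussI p)]
  exact le_antisymm (csSup_le ⟨_, hmem⟩ hub) (le_csSup ⟨_, hub⟩ hmem)
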